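/- Let U ⊆ ℝⁿ be open, k ≥ 1, l ≥ k+1, and h ∈ C^k(U). Let g : U → ℝ be continuous with g = h^l on some open set A ⊆ U \ h⁻¹(0) and g = −h^l on U \ (A ∪ h⁻¹(0)), and g = 0 on h⁻¹(0). Then all partial derivatives of g of order at most k exist at every point of h⁻¹(0) and are equal to 0 there. -/

import Mathlib

open Filter Asymptotics Set Topology Nat

private lemma aux_iteratedDeriv_pow (l : ℕ) :
    ∀ i : ℕ, i ≤ l →
      iteratedDeriv i (fun t : ℝ => t ^ l) =
        fun t : ℝ => (l.descFactorial i : ℝ) * t ^ (l - i) := by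
  intro i
  induction i with
  | zero => intro _; funext t; simp
  | succ i ih =>
    intro hil
    have hil' : i ≤ l := by omega
    rw [iteratedDeriv_succ, ih hil']
    funext t
    rw [deriv_const_mul _ (differentiableAt_pow _), deriv_pow_field,
      Nat.descFactorial_succ, show l - i - 1 = l - (i + 1) from Nat.sub_sub l i 1]
    push_cast
    ring

private lemma aux_descFactorial_le (l i : ℕ) (h : i ≤ l) : l.descFactorial i ≤ l ! :=
  Nat.le_of_dvd l.factorial_pos
    ⟨Nat.factorial (l - i), by rw [← Nat.factorial_mul_descFactorial h]; ring⟩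

theorem stmt_11 (n k l : ℕ) (hk : 1 ≤ k) (hl : k + 1 ≤ l)
    (U A : Set (Fin n → ℝ)) (hU : IsOpen U) (hA : IsOpen A)
    (h g : (Fin n → ℝ) → ℝ)
    (hAsub : A ⊆ U \ {x | h x = 0})
    (hh : ContDiffOn ℝ k h U)
    (hg : ContinuousOn g U)
    (hgA : ∀ x ∈ A, g x = h x ^ l)
    (hgB : ∀ x ∈ U \ (A ∪ {x | h x = 0}), g x = -(h x ^ l))
    (hg0 : ∀ x ∈ U, h x = 0 → g x = 0) :
    ∀ x ∈ U, h x = 0 → ∀ j : ℕ, j ≤ k →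
      iteratedFDerivWithin ℝ j g U x = 0 := by
  have hUD : UniqueDiffOn ℝ U := hU.uniqueDiffOn
  have hhc : ContinuousOn h U := hh.continuousOn
  have hW : IsOpen (U ∩ h ⁻¹' {(0:ℝ)}ᶜ) :=
    hhc.isOpen_inter_preimage hU isOpen_compl_singleton
  have hBeq : (U ∩ h ⁻¹' {(0:ℝ)}ᶜ) \ A =
      (U ∩ h ⁻¹' {(0:ℝ)}ᶜ) ∩ (fun z => g z - h z ^ l) ⁻¹' {(0:ℝ)}ᶜ := by
    ext y
    simp only [mem_diff, mem_inter_iff, mem_preimage, mem_compl_iff, mem_singleton_iff]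
    constructor
    · rintro ⟨⟨hyU, hy0⟩, hyA⟩
      refine ⟨⟨hyU, hy0⟩, ?_⟩
      rw [hgB y ⟨hyU, fun hc => hc.elim hyA hy0⟩]
      intro hcontra
      have hpl : h y ^ l = 0 := by linarith
      exact hy0 ((pow_eq_zero_iff (by omega : l ≠ 0)).mp hpl)
    · rintro ⟨⟨hyU, hy0⟩, hne⟩
      refine ⟨⟨hyU, hy0⟩, fun hyA => hne ?_⟩
      rw [hgA y hyA, sub_self]
  have hB : IsOpen ((U ∩ h ⁻¹' {(0:ℝ)}ᶜ) \ A) := by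
    rw [hBeq]
    exact ((hg.mono inter_subset_left).sub
      ((hhc.mono inter_subset_left).pow l)).isOpen_inter_preimage hW isOpen_compl_singleton
  -- local comparison with ± h^l away from the zero set
  have hlocal : ∀ (j : ℕ) (y : Fin n → ℝ), y ∈ U → h y ≠ 0 →
      ‖iteratedFDerivWithin ℝ j g U y‖ =
        ‖iteratedFDerivWithin ℝ j ((fun t : ℝ => t ^ l) ∘ h) U y‖ := by
    intro j y hyU hy0
    by_cases hyA : y ∈ A
    · have hev : g =ᶠ[𝓝[U] y] ((fun t : ℝ => t ^ l) ∘ h) := by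
        filter_upwards [mem_nhdsWithin_of_mem_nhds (hA.mem_nhds hyA)] with z hz
        exact hgA z hz
      rw [hev.iteratedFDerivWithin_eq (hgA y hyA) j]
    · have hyB : y ∈ (U ∩ h ⁻¹' {(0:ℝ)}ᶜ) \ A := ⟨⟨hyU, hy0⟩, hyA⟩
      have hev : g =ᶠ[𝓝[U] y] (fun z => -(h z ^ l)) := by
        filter_upwards [mem_nhdsWithin_of_mem_nhds (hB.mem_nhds hyB)] with z hz
        exact hgB z ⟨hz.1.1, fun hc => hc.elim hz.2 hz.1.2⟩
      have hgy : g y = -(h y ^ l) := hgB y ⟨hyU, fun hc => hc.elim hyA hy0⟩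
      rw [hev.iteratedFDerivWithin_eq hgy j]
      have hneg : iteratedFDerivWithin ℝ j (fun z => -(h z ^ l)) U y
          = -iteratedFDerivWithin ℝ j (fun z => h z ^ l) U y :=
        iteratedFDerivWithin_neg_apply hUD hyU
      rw [hneg, norm_neg]
      rfl
  have key : ∀ j : ℕ, j ≤ k → ∀ x ∈ U, h x = 0 →
      iteratedFDerivWithin ℝ j g U x = 0 := by
    intro j
    induction j with
    | zero =>
      intro _ x hxU hx0
      ext mv
      simp [hg0 x hxU hx0]
    | succ j ih =>
      intro hjk x hxU hx0
      have hjk' : j ≤ k := by omega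
      have hFx : iteratedFDerivWithin ℝ j g U x = 0 := ih hjk' x hxU hx0
      set m := l - j with hm
      have hm2 : 1 < m := by omega
      set D : ℝ := 1 + ∑ i ∈ Finset.range (k + 1), ‖iteratedFDerivWithin ℝ i h U x‖ with hD
      have hsum_nonneg : 0 ≤ ∑ i ∈ Finset.range (k + 1), ‖iteratedFDerivWithin ℝ i h U x‖ :=
        Finset.sum_nonneg fun i _ => norm_nonneg _
      have hD1 : (1:ℝ) ≤ D := by rw [hD]; linarith
      have hD0 : (0:ℝ) ≤ D := by linarith
      have hdiff : HasFDerivWithinAt h (fderivWithin ℝ h U x) U x :=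
        ((hh.differentiableOn (by exact_mod_cast (show k ≠ 0 by omega))) x hxU).hasFDerivWithinAt
      obtain ⟨C, hCpos, hCb⟩ := hdiff.isBigO_sub.exists_pos
      have e1 : ∀ᶠ y in 𝓝[U] x, y ∈ U := eventually_mem_nhdsWithin
      have e2 : ∀ᶠ y in 𝓝[U] x, |h y| ≤ 1 := by
        have hcw : Filter.Tendsto h (𝓝[U] x) (𝓝 (h x)) := hhc x hxU
        rw [hx0] at hcw
        have h1 : ∀ᶠ t : ℝ in 𝓝 (0:ℝ), |t| ≤ 1 := by
          filter_upwards [Metric.closedBall_mem_nhds (0:ℝ) one_pos] with t ht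
          simpa [Real.dist_eq] using ht
        exact hcw.eventually h1
      have e3 : ∀ᶠ y in 𝓝[U] x, |h y| ≤ C * ‖y - x‖ := by
        filter_upwards [hCb.bound] with y hy
        simpa [hx0, Real.norm_eq_abs] using hy
      have e4 : ∀ᶠ y in 𝓝[U] x, ∀ i ∈ Finset.range (k + 1),
          ‖iteratedFDerivWithin ℝ i h U y‖ ≤ D := by
        rw [Filter.eventually_all_finset]
        intro i hi
        have hik : i ≤ k := Nat.lt_succ_iff.mp (Finset.mem_range.mp hi)
        have hcont : ContinuousWithinAt (iteratedFDerivWithin ℝ i h U) U x :=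
          (hh.continuousOn_iteratedFDerivWithin
            (by exact_mod_cast hik) hUD) x hxU
        have hlt : ‖iteratedFDerivWithin ℝ i h U x‖ < D := by
          have hle : ‖iteratedFDerivWithin ℝ i h U x‖ ≤
              ∑ i' ∈ Finset.range (k + 1), ‖iteratedFDerivWithin ℝ i' h U x‖ :=
            Finset.single_le_sum (f := fun i' => ‖iteratedFDerivWithin ℝ i' h U x‖) (fun i' _ => norm_nonneg _) hi
          rw [hD]; linarith
        have hnb : ∀ᶠ w in 𝓝 (iteratedFDerivWithin ℝ i h U x), ‖w‖ ≤ D := by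
          filter_upwards [(isOpen_lt continuous_norm continuous_const).mem_nhds hlt] with w hw
          exact le_of_lt hw
        exact hcont.eventually hnb
      set M : ℝ := (j ! : ℝ) * ((l ! : ℝ) * C ^ m) * D ^ j with hM
      have hM0 : 0 ≤ M :=
        mul_nonneg (mul_nonneg (by positivity)
          (mul_nonneg (by positivity) (pow_nonneg hCpos.le m))) (pow_nonneg hD0 j)
      have ebound : ∀ᶠ y in 𝓝[U] x,
          ‖iteratedFDerivWithin ℝ j g U y‖ ≤ M * ‖y - x‖ ^ m := by
        filter_upwards [e1, e2, e3, e4] with y hyU hy1 hyC hyD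
        by_cases hy0 : h y = 0
        · rw [ih hjk' y hyU hy0]
          simpa using mul_nonneg hM0 (pow_nonneg (norm_nonneg _) m)
        · rw [hlocal j y hyU hy0]
          have hCbd : ∀ i, i ≤ j →
              ‖iteratedFDerivWithin ℝ i (fun t : ℝ => t ^ l) Set.univ (h y)‖ ≤
                (l ! : ℝ) * |h y| ^ m := by
            intro i hij
            rw [iteratedFDerivWithin_univ, norm_iteratedFDeriv_eq_norm_iteratedDeriv,
              aux_iteratedDeriv_pow l i (by omega), Real.norm_eq_abs, abs_mul, abs_pow,
              Nat.abs_cast]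
            have h1 : ((l.descFactorial i : ℕ) : ℝ) ≤ (l ! : ℝ) :=
              Nat.cast_le.mpr (aux_descFactorial_le l i (by omega))
            have h2 : |h y| ^ (l - i) ≤ |h y| ^ m :=
              pow_le_pow_of_le_one (abs_nonneg _) hy1 (by omega)
            exact mul_le_mul h1 h2 (pow_nonneg (abs_nonneg _) _) (Nat.cast_nonneg _)
          have hDbd : ∀ i, 1 ≤ i → i ≤ j →
              ‖iteratedFDerivWithin ℝ i h U y‖ ≤ D ^ i := by
            intro i h1i hij
            exact (hyD i (Finset.mem_range.mpr (by omega))).trans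
              (le_self_pow₀ hD1 (by omega))
          have hcomp := norm_iteratedFDerivWithin_comp_le
            ((contDiff_id.pow l).contDiffOn) hh (by exact_mod_cast hjk')
            uniqueDiffOn_univ hUD (Set.mapsTo_univ h U) hyU hCbd hDbd
          have hpow : |h y| ^ m ≤ C ^ m * ‖y - x‖ ^ m := by
            rw [← mul_pow]
            exact pow_le_pow_left₀ (abs_nonneg _) hyC m
          calc ‖iteratedFDerivWithin ℝ j ((fun t : ℝ => t ^ l) ∘ h) U y‖
              ≤ (j ! : ℝ) * ((l ! : ℝ) * |h y| ^ m) * D ^ j := hcomp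
            _ ≤ (j ! : ℝ) * ((l ! : ℝ) * (C ^ m * ‖y - x‖ ^ m)) * D ^ j := by
                apply mul_le_mul_of_nonneg_right _ (pow_nonneg hD0 j)
                apply mul_le_mul_of_nonneg_left _ (by positivity)
                exact mul_le_mul_of_nonneg_left hpow (by positivity)
            _ = M * ‖y - x‖ ^ m := by rw [hM]; ring
      have hbig : (iteratedFDerivWithin ℝ j g U) =O[𝓝[U] x]
          (fun y => ‖y - x‖ ^ m) :=
        Asymptotics.IsBigO.of_bound M (by filter_upwards [ebound] with y hy; simpa using hy)
      have hlit : (fun y : Fin n → ℝ => ‖y - x‖ ^ m) =o[𝓝[U] x] (fun y => y - x) :=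
        (Asymptotics.isLittleO_pow_sub_sub x hm2).mono nhdsWithin_le_nhds
      have hfinal := hbig.trans_isLittleO hlit
      have hder : HasFDerivWithinAt (iteratedFDerivWithin ℝ j g U)
          (0 : (Fin n → ℝ) →L[ℝ] ((Fin n → ℝ) [×j]→L[ℝ] ℝ)) U x := by
        simp_rw [hasFDerivWithinAt_iff_isLittleO]
        simpa [hFx] using hfinal
      have hfd : fderivWithin ℝ (iteratedFDerivWithin ℝ j g U) U x = 0 :=
        hder.fderivWithin (hUD x hxU)
      ext mv
      rw [iteratedFDerivWithin_succ_apply_left, hfd]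
      simp
  exact fun x hxU hx0 j hjk => key j hjk x hxU hx0
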